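/- For independent random variables X₁,…,Xₙ with values in [0,1], X = ∑ᵢ Xᵢ, and 0 ≤ ε ≤ 1, it holds that Pr[X ≥ (1+ε)E[X]] ≤ exp(−ε² E[X] / 3). -/

import Mathlib

open MeasureTheory ProbabilityTheory



section ChernoffAux
open MeasureTheory ProbabilityTheory Real

lemma log_one_add_ge {x : ℝ} (h0 : 0 ≤ x) (h1 : x ≤ 1) :
    Real.log 2 * x ≤ Real.log (1 + x) := by
  rcases eq_or_lt_of_le h0 with h | h
  · simp [← h]
  rcases eq_or_lt_of_le h1 with h' | h'
  · subst h'; norm_num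
  have := strictConcaveOn_log_Ioi.concaveOn.2 (Set.mem_Ioi.2 one_pos)
    (Set.mem_Ioi.2 (by norm_num : (0:ℝ) < 2)) (by linarith : (0:ℝ) ≤ 1 - x) h0 (by ring)
  simp only [smul_eq_mul] at this
  calc Real.log 2 * x = (1 - x) * Real.log 1 + x * Real.log 2 := by
        simp [Real.log_one]; ring
    _ ≤ Real.log ((1 - x) * 1 + x * 2) := this
    _ = Real.log (1 + x) := by ring_nf

lemma key_ineq {ε : ℝ} (h0 : 0 ≤ ε) (h1 : ε ≤ 1) :
    ε + ε ^ 2 / 3 ≤ (1 + ε) * Real.log (1 + ε) := by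
  set f : ℝ → ℝ := fun x => (1 + x) * Real.log (1 + x) - x - x ^ 2 / 3 with hf
  have hderiv : ∀ x ∈ Set.Ioo (0:ℝ) 1, HasDerivAt f (Real.log (1 + x) - 2 * x / 3) x := by
    intro x hx
    have hx0 : (0:ℝ) < 1 + x := by linarith [hx.1]
    have h1' : HasDerivAt (fun y : ℝ => 1 + y) 1 x := (hasDerivAt_id x).const_add 1
    have h2 : HasDerivAt (fun y : ℝ => Real.log (1 + y)) (1 / (1 + x)) x := by
      have := (Real.hasDerivAt_log hx0.ne').comp x h1'
      simpa [one_div, Function.comp_def] using this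
    have h3 : HasDerivAt (fun y : ℝ => (1 + y) * Real.log (1 + y))
        (1 * Real.log (1 + x) + (1 + x) * (1 / (1 + x))) x := h1'.mul h2
    have h4 : HasDerivAt (fun y : ℝ => y ^ 2 / 3) (2 * x / 3) x := by
      have := (hasDerivAt_pow 2 x).div_const 3
      simpa using this
    have := (h3.sub (hasDerivAt_id x)).sub h4
    refine this.congr_deriv ?_
    rw [mul_one_div_cancel hx0.ne']; ring
  have hmono : MonotoneOn f (Set.Icc (0:ℝ) 1) := by
    apply monotoneOn_of_deriv_nonneg (convex_Icc 0 1)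
    · apply ContinuousOn.sub
      apply ContinuousOn.sub
      · exact (continuousOn_const.add continuousOn_id).mul
          ((continuousOn_const.add continuousOn_id).log
            (fun x hx => by have := hx.1; simp at this ⊢; linarith [hx.1]))
      · exact continuousOn_id
      · exact (continuousOn_pow 2).div_const 3
    · intro x hx
      rw [interior_Icc] at hx
      exact (hderiv x hx).differentiableAt.differentiableWithinAt
    · intro x hx
      rw [interior_Icc] at hx
      rw [(hderiv x hx).deriv]
      have h2 : (2:ℝ)/3 ≤ Real.log 2 := by
        have := Real.log_two_gt_d9
        linarith
      have := log_one_add_ge hx.1.le hx.2.le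
      nlinarith [hx.1]
  have h0' : f 0 = 0 := by simp [hf]
  have := hmono (Set.mem_Icc.2 ⟨le_refl 0, zero_le_one⟩) (Set.mem_Icc.2 ⟨h0, h1⟩) h0
  rw [h0'] at this
  simp only [hf] at this
  linarith

end ChernoffAux

/-- Simplified multiplicative Chernoff bound: for independent random variables with
values in `[0,1]`, `X = ∑ᵢ Xᵢ` and `0 ≤ ε ≤ 1`,
`Pr[X ≥ (1+ε)E[X]] ≤ exp(−ε² E[X] / 3)`. -/
theorem chernoff_bound_simplified {Ω : Type*} [MeasureSpace Ω]
    [IsProbabilityMeasure (ℙ : Measure Ω)]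
    (n : ℕ) (X : Fin n → Ω → ℝ) (hmeas : ∀ i, Measurable (X i))
    (hind : iIndepFun X ℙ)
    (hmem : ∀ i ω, X i ω ∈ Set.Icc (0 : ℝ) 1)
    (ε : ℝ) (hε0 : 0 ≤ ε) (hε1 : ε ≤ 1) :
    (ℙ {ω | (1 + ε) * (∫ ω, ∑ i, X i ω ∂ℙ) ≤ ∑ i, X i ω}).toReal
      ≤ Real.exp (-(ε ^ 2 * (∫ ω, ∑ i, X i ω ∂ℙ)) / 3) := by
  set t : ℝ := Real.log (1 + ε) with ht_def
  have hε1' : (0:ℝ) < 1 + ε := by linarith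
  have ht0 : 0 ≤ t := Real.log_nonneg (by linarith)
  have het : Real.exp t = 1 + ε := Real.exp_log hε1'
  -- integrability of each X i
  have hXint : ∀ i, Integrable (X i) ℙ := by
    intro i
    refine Integrable.mono' (integrable_const 1) (hmeas i).aestronglyMeasurable ?_
    filter_upwards with ω
    rw [Real.norm_of_nonneg (hmem i ω).1]; exact (hmem i ω).2
  -- integrability of exp (t * X i)
  have hexpint : ∀ i, Integrable (fun ω => Real.exp (t * X i ω)) ℙ := by
    intro i
    refine Integrable.mono' (integrable_const (Real.exp t))
      ((hmeas i).const_mul t).exp.aestronglyMeasurable ?_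
    filter_upwards with ω
    rw [Real.norm_of_nonneg (Real.exp_nonneg _)]
    exact Real.exp_le_exp.2 (mul_le_of_le_one_right ht0 (hmem i ω).2)
  set μi : Fin n → ℝ := fun i => ∫ ω, X i ω ∂ℙ with hμi
  have hμi0 : ∀ i, 0 ≤ μi i := fun i =>
    integral_nonneg (fun ω => (hmem i ω).1)
  have hEX : (∫ ω, ∑ i, X i ω ∂ℙ) = ∑ i, μi i :=
    integral_finset_sum _ (fun i _ => hXint i)
  set M : ℝ := ∑ i, μi i with hM
  have hM0 : 0 ≤ M := Finset.sum_nonneg fun i _ => hμi0 i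
  -- mgf bound for each i
  have hmgf : ∀ i, mgf (X i) ℙ t ≤ Real.exp (μi i * (Real.exp t - 1)) := by
    intro i
    have hpt : ∀ ω, Real.exp (t * X i ω) ≤ 1 + X i ω * (Real.exp t - 1) := by
      intro ω
      obtain ⟨hx0, hx1⟩ := hmem i ω
      have := convexOn_exp.2 (Set.mem_univ (0:ℝ)) (Set.mem_univ t)
        (by linarith : (0:ℝ) ≤ 1 - X i ω) hx0 (by ring)
      simp only [smul_eq_mul, mul_zero, Real.exp_zero, mul_one] at this
      have he : t * X i ω = 0 + X i ω * t := by ring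
      rw [he]
      linarith [this]
    have h1 : mgf (X i) ℙ t ≤ ∫ ω, (1 + X i ω * (Real.exp t - 1)) ∂ℙ := by
      refine integral_mono (hexpint i) ?_ hpt
      exact (integrable_const 1).add ((hXint i).mul_const _)
    have h2 : (∫ ω, (1 + X i ω * (Real.exp t - 1)) ∂ℙ) = 1 + μi i * (Real.exp t - 1) := by
      rw [integral_add (integrable_const 1) ((hXint i).mul_const _),
        integral_const, integral_mul_const]
      simp [hμi]
    calc mgf (X i) ℙ t ≤ 1 + μi i * (Real.exp t - 1) := h1.trans_eq h2
      _ ≤ Real.exp (μi i * (Real.exp t - 1)) := by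
          have := Real.add_one_le_exp (μi i * (Real.exp t - 1)); linarith
  -- sum is measurable, integrable exp of sum
  have hsum_meas : Measurable (∑ i, X i) := by
    have h := Finset.measurable_sum Finset.univ (fun (i : Fin n) _ => hmeas i)
    convert h using 1
    ext ω; simp
  have hexpsum : Integrable (fun ω => Real.exp (t * (∑ i, X i) ω)) ℙ := by
    refine Integrable.mono' (integrable_const (Real.exp (t * n)))
      ((hsum_meas.const_mul t).exp.aestronglyMeasurable) ?_
    filter_upwards with ω
    rw [Real.norm_of_nonneg (Real.exp_nonneg _)]
    apply Real.exp_le_exp.2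
    have : (∑ i, X i) ω ≤ n := by
      rw [Finset.sum_apply]
      calc ∑ i, X i ω ≤ ∑ _i : Fin n, (1:ℝ) := Finset.sum_le_sum fun i _ => (hmem i ω).2
        _ = n := by simp
    exact mul_le_mul_of_nonneg_left this ht0
  -- Chernoff
  have hcher := measure_ge_le_exp_mul_mgf (μ := ℙ) (X := ∑ i, X i)
    ((1 + ε) * (∫ ω, ∑ i, X i ω ∂ℙ)) ht0 hexpsum
  have hset : {ω | (1 + ε) * (∫ ω, ∑ i, X i ω ∂ℙ) ≤ ∑ i, X i ω}
      = {ω | (1 + ε) * (∫ ω, ∑ i, X i ω ∂ℙ) ≤ (∑ i, X i) ω} := by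
    ext ω; simp [Finset.sum_apply]
  rw [hset]
  refine hcher.trans ?_
  have hmgfsum : mgf (∑ i, X i) ℙ t = ∏ i, mgf (X i) ℙ t :=
    hind.mgf_sum hmeas Finset.univ
  have hprod : ∏ i, mgf (X i) ℙ t ≤ Real.exp (M * (Real.exp t - 1)) := by
    calc ∏ i, mgf (X i) ℙ t ≤ ∏ i, Real.exp (μi i * (Real.exp t - 1)) :=
          Finset.prod_le_prod (fun i _ => mgf_nonneg) (fun i _ => hmgf i)
      _ = Real.exp (∑ i, μi i * (Real.exp t - 1)) := by rw [Real.exp_sum]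
      _ = Real.exp (M * (Real.exp t - 1)) := by rw [hM, Finset.sum_mul]
  calc Real.exp (-t * ((1 + ε) * (∫ ω, ∑ i, X i ω ∂ℙ))) * mgf (∑ i, X i) ℙ t
      ≤ Real.exp (-t * ((1 + ε) * M)) * Real.exp (M * (Real.exp t - 1)) := by
        rw [hEX]
        exact mul_le_mul_of_nonneg_left (hmgfsum.trans_le hprod) (Real.exp_nonneg _)
    _ = Real.exp (-t * ((1 + ε) * M) + M * (Real.exp t - 1)) := (Real.exp_add _ _).symm
    _ ≤ Real.exp (-(ε ^ 2 * (∫ ω, ∑ i, X i ω ∂ℙ)) / 3) := by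
        apply Real.exp_le_exp.2
        rw [het]
        have hkey := key_ineq hε0 hε1
        nlinarith [hM0, mul_le_mul_of_nonneg_right hkey hM0]
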